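/- For all real numbers t < T, x, k, the map σ ↦ BS(t,T,x,k,σ) is a continuous, strictly increasing bijection from (0,∞) onto the open interval (max(e^x − e^k, 0), e^x); in particular lim_{σ→0⁺} BS(t,T,x,k,σ) = max(e^x − e^k, 0) and lim_{σ→∞} BS(t,T,x,k,σ) = e^x, so the inverse BS^{−1}(t,T,x,k,·) : (max(e^x − e^k, 0), e^x) → (0,∞) is well defined. -/

import Mathlib

noncomputable section

/-- Standard normal density. -/
def phi (z : ℝ) : ℝ := (Real.sqrt (2 * Real.pi))⁻¹ * Real.exp (-z ^ 2 / 2)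

/-- Standard normal cumulative distribution function. -/
def N (y : ℝ) : ℝ := ∫ z in Set.Iic y, phi z

/-- Black–Scholes auxiliary quantity `d₁`. -/
def d1 (t T x k σ : ℝ) : ℝ :=
  (x - k) / (σ * Real.sqrt (T - t)) + σ * Real.sqrt (T - t) / 2

/-- Black–Scholes auxiliary quantity `d₂`. -/
def d2 (t T x k σ : ℝ) : ℝ :=
  (x - k) / (σ * Real.sqrt (T - t)) - σ * Real.sqrt (T - t) / 2

/-- Black–Scholes call price with log-spot `x`, log-strike `k`,
time to maturity `T - t` and volatility `σ`. -/
def BS (t T x k σ : ℝ) : ℝ :=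
  Real.exp x * N (d1 t T x k σ) - Real.exp k * N (d2 t T x k σ)

open Real Filter MeasureTheory Set intervalIntegral

lemma phi_pos (z : ℝ) : 0 < phi z := by
  unfold phi
  have h2π : (0:ℝ) < 2 * Real.pi := by positivity
  positivity

lemma phi_continuous : Continuous phi := by
  unfold phi; fun_prop

lemma phi_eq (z : ℝ) :
    phi z = (Real.sqrt (2 * Real.pi))⁻¹ * Real.exp (-(1/2) * z ^ 2) := by
  unfold phi; ring_nf

lemma phi_integrable : Integrable phi := by
  have h : Integrable (fun z : ℝ => Real.exp (-(1/2) * z ^ 2)) :=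
    integrable_exp_neg_mul_sq (by norm_num)
  have h2 := h.const_mul (Real.sqrt (2 * Real.pi))⁻¹
  exact h2.congr (Filter.Eventually.of_forall fun z => (phi_eq z).symm)

lemma integral_phi : ∫ z : ℝ, phi z = 1 := by
  have h := integral_gaussian (1/2 : ℝ)
  have h2 : Real.sqrt (Real.pi / (1/2)) = Real.sqrt (2 * Real.pi) := by
    norm_num [mul_comm]
  have : ∫ z : ℝ, phi z
      = (Real.sqrt (2 * Real.pi))⁻¹ * ∫ z : ℝ, Real.exp (-(1/2) * z ^ 2) := by
    rw [← MeasureTheory.integral_const_mul]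
    exact integral_congr_ae (Filter.Eventually.of_forall fun z => phi_eq z)
  rw [this, h, h2, inv_mul_cancel₀]
  positivity

lemma N_sub (a b : ℝ) : N b - N a = ∫ z in a..b, phi z := by
  unfold N
  exact integral_Iic_sub_Iic phi_integrable.integrableOn phi_integrable.integrableOn

lemma hasDerivAt_N (y : ℝ) : HasDerivAt N (phi y) y := by
  have h : ∀ u, N u = N 0 + ∫ z in (0:ℝ)..u, phi z := by
    intro u; have := N_sub 0 u; linarith
  have hd : HasDerivAt (fun u => N 0 + ∫ z in (0:ℝ)..u, phi z) (phi y) y :=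
    ((phi_continuous.integral_hasStrictDerivAt 0 y).hasDerivAt).const_add (N 0)
  exact hd.congr_of_eventuallyEq (Filter.Eventually.of_forall h)

lemma N_continuous : Continuous N :=
  continuous_iff_continuousAt.2 fun y => (hasDerivAt_N y).continuousAt

lemma N_strictMono : StrictMono N := by
  intro a b hab
  have h : 0 < ∫ z in a..b, phi z :=
    intervalIntegral_pos_of_pos (phi_integrable.intervalIntegrable) phi_pos hab
  have := N_sub a b
  linarith

lemma N_tendsto_one : Tendsto N atTop (nhds 1) := by
  have hc : AECover (volume : Measure ℝ) atTop fun y : ℝ => Iic y :=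
    aecover_Iic tendsto_id
  have := hc.integral_tendsto_of_countably_generated phi_integrable
  rwa [integral_phi] at this

lemma N_tendsto_zero : Tendsto N atBot (nhds 0) := by
  have h : Tendsto (fun a : ℝ => ∫ z in a..(0:ℝ), phi z) atBot
      (nhds (∫ z in Iic (0:ℝ), phi z)) :=
    intervalIntegral_tendsto_integral_Iic 0 phi_integrable.integrableOn tendsto_id
  have heq : ∀ a : ℝ, N a = N 0 - ∫ z in a..(0:ℝ), phi z := by
    intro a; have := N_sub a 0; linarith
  have : Tendsto (fun a : ℝ => N 0 - ∫ z in a..(0:ℝ), phi z) atBot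
      (nhds (N 0 - ∫ z in Iic (0:ℝ), phi z)) := (tendsto_const_nhds.sub h)
  simp only [N] at heq ⊢
  have h0 : (N 0 - ∫ z in Iic (0:ℝ), phi z) = 0 := by simp [N]
  rw [← h0]
  exact this.congr fun a => (heq a).symm

lemma N_lt_one (y : ℝ) : N y < 1 := by
  have h1 : N (y + 1) ≤ 1 := by
    refine ge_of_tendsto N_tendsto_one ?_
    filter_upwards [eventually_ge_atTop (y + 1)] with z hz
    exact N_strictMono.monotone hz
  have := N_strictMono (lt_add_one y)
  linarith

lemma N_pos (y : ℝ) : 0 < N y := by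
  have h1 : 0 ≤ N (y - 1) := by
    refine le_of_tendsto N_tendsto_zero ?_
    filter_upwards [eventually_le_atBot (y - 1)] with z hz
    exact N_strictMono.monotone hz
  have := N_strictMono (show y - 1 < y by linarith)
  linarith

section BSlemmas

variable {t T x k : ℝ} (htT : t < T)

lemma sqrtT_pos (htT : t < T) : 0 < Real.sqrt (T - t) :=
  Real.sqrt_pos.2 (by linarith)

lemma hasDerivAt_d1 (htT : t < T) {σ : ℝ} (hσ : 0 < σ) :
    HasDerivAt (fun s => d1 t T x k s)
      (-((x - k) / (σ ^ 2 * Real.sqrt (T - t))) + Real.sqrt (T - t) / 2) σ := by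
  have hs := sqrtT_pos htT
  have hone : HasDerivAt (fun s : ℝ => (x - k) / Real.sqrt (T - t) * s⁻¹)
      ((x - k) / Real.sqrt (T - t) * (-(σ ^ 2)⁻¹)) σ :=
    (hasDerivAt_inv (ne_of_gt hσ)).const_mul _
  have h1' := hone.congr_of_eventuallyEq (Filter.Eventually.of_forall
    (fun s : ℝ => by rw [div_mul_eq_div_div_swap, div_eq_mul_inv] :
      ∀ s : ℝ, (x - k) / (s * Real.sqrt (T - t)) = (x - k) / Real.sqrt (T - t) * s⁻¹))
  have hval : (x - k) / Real.sqrt (T - t) * (-(σ ^ 2)⁻¹)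
      = -((x - k) / (σ ^ 2 * Real.sqrt (T - t))) := by
    rw [mul_neg, ← div_eq_mul_inv, div_mul_eq_div_div_swap]
  rw [hval] at h1'
  have h1 : HasDerivAt (fun s : ℝ => (x - k) / (s * Real.sqrt (T - t)))
      (-((x - k) / (σ ^ 2 * Real.sqrt (T - t)))) σ := h1'
  have h2 : HasDerivAt (fun s : ℝ => s * Real.sqrt (T - t) / 2)
      (Real.sqrt (T - t) / 2) σ :=
    (hasDerivAt_mul_const (Real.sqrt (T - t))).div_const 2
  exact h1.add h2

lemma hasDerivAt_d2 (htT : t < T) {σ : ℝ} (hσ : 0 < σ) :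
    HasDerivAt (fun s => d2 t T x k s)
      (-((x - k) / (σ ^ 2 * Real.sqrt (T - t))) - Real.sqrt (T - t) / 2) σ := by
  have hs := sqrtT_pos htT
  have hone : HasDerivAt (fun s : ℝ => (x - k) / Real.sqrt (T - t) * s⁻¹)
      ((x - k) / Real.sqrt (T - t) * (-(σ ^ 2)⁻¹)) σ :=
    (hasDerivAt_inv (ne_of_gt hσ)).const_mul _
  have h1' := hone.congr_of_eventuallyEq (Filter.Eventually.of_forall
    (fun s : ℝ => by rw [div_mul_eq_div_div_swap, div_eq_mul_inv] :
      ∀ s : ℝ, (x - k) / (s * Real.sqrt (T - t)) = (x - k) / Real.sqrt (T - t) * s⁻¹))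
  have hval : (x - k) / Real.sqrt (T - t) * (-(σ ^ 2)⁻¹)
      = -((x - k) / (σ ^ 2 * Real.sqrt (T - t))) := by
    rw [mul_neg, ← div_eq_mul_inv, div_mul_eq_div_div_swap]
  rw [hval] at h1'
  have h1 : HasDerivAt (fun s : ℝ => (x - k) / (s * Real.sqrt (T - t)))
      (-((x - k) / (σ ^ 2 * Real.sqrt (T - t)))) σ := h1'
  have h2 : HasDerivAt (fun s : ℝ => s * Real.sqrt (T - t) / 2)
      (Real.sqrt (T - t) / 2) σ :=
    (hasDerivAt_mul_const (Real.sqrt (T - t))).div_const 2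
  exact h1.sub h2

/-- The key identity `e^x φ(d₁) = e^k φ(d₂)`. -/
lemma key_identity (htT : t < T) {σ : ℝ} (hσ : 0 < σ) :
    Real.exp x * phi (d1 t T x k σ) = Real.exp k * phi (d2 t T x k σ) := by
  have hs := sqrtT_pos htT
  unfold phi d1 d2
  rw [mul_comm (Real.exp x), mul_comm (Real.exp k), mul_assoc, mul_assoc,
    ← Real.exp_add, ← Real.exp_add]
  congr 1
  have hne : σ * Real.sqrt (T - t) ≠ 0 := by positivity
  have hAB : (x - k) / (σ * Real.sqrt (T - t)) * (σ * Real.sqrt (T - t) / 2)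
      = (x - k) / 2 := by
    field_simp
  rw [Real.exp_eq_exp]
  linear_combination (-2 : ℝ) * hAB

lemma hasDerivAt_BS (htT : t < T) {σ : ℝ} (hσ : 0 < σ) :
    HasDerivAt (BS t T x k)
      (Real.exp x * phi (d1 t T x k σ) * Real.sqrt (T - t)) σ := by
  have hd1 := (hasDerivAt_N (d1 t T x k σ)).comp σ (hasDerivAt_d1 (x := x) (k := k) htT hσ)
  have hd2 := (hasDerivAt_N (d2 t T x k σ)).comp σ (hasDerivAt_d2 (x := x) (k := k) htT hσ)
  have h := ((hd1.const_mul (Real.exp x)).sub (hd2.const_mul (Real.exp k)))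
  have hident := key_identity (x := x) (k := k) htT hσ
  have h' : HasDerivAt (BS t T x k) _ σ := h
  convert h' using 1
  linear_combination ((x - k) / (σ ^ 2 * Real.sqrt (T - t)) + Real.sqrt (T - t) / 2) * hident

lemma BS_continuousOn (htT : t < T) : ContinuousOn (BS t T x k) (Set.Ioi 0) :=
  fun σ hσ => ((hasDerivAt_BS (x := x) (k := k) htT hσ).continuousAt).continuousWithinAt

lemma BS_strictMonoOn (htT : t < T) : StrictMonoOn (BS t T x k) (Set.Ioi 0) := by
  refine strictMonoOn_of_deriv_pos (convex_Ioi 0) (BS_continuousOn htT) ?_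
  intro σ hσ
  rw [interior_Ioi] at hσ
  rw [(hasDerivAt_BS htT hσ).deriv]
  exact mul_pos (mul_pos (Real.exp_pos x) (phi_pos _)) (sqrtT_pos htT)

lemma BS_tendsto_atTop (htT : t < T) :
    Tendsto (BS t T x k) atTop (nhds (Real.exp x)) := by
  have hs := sqrtT_pos htT
  have hA : Tendsto (fun σ : ℝ => (x - k) / (σ * Real.sqrt (T - t))) atTop (nhds 0) := by
    apply Tendsto.div_atTop tendsto_const_nhds
    exact (tendsto_id.atTop_mul_const hs)
  have hB : Tendsto (fun σ : ℝ => σ * Real.sqrt (T - t) / 2) atTop atTop :=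
    (tendsto_id.atTop_mul_const hs).atTop_div_const (by norm_num)
  have hd1 : Tendsto (fun σ : ℝ => d1 t T x k σ) atTop atTop := by
    unfold d1; exact hA.add_atTop hB
  have hd2 : Tendsto (fun σ : ℝ => d2 t T x k σ) atTop atBot := by
    unfold d2
    simpa [sub_eq_add_neg] using hA.add_atBot (tendsto_neg_atBot_iff.mpr hB)
  have h1 : Tendsto (fun σ : ℝ => N (d1 t T x k σ)) atTop (nhds 1) :=
    N_tendsto_one.comp hd1
  have h2 : Tendsto (fun σ : ℝ => N (d2 t T x k σ)) atTop (nhds 0) :=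
    N_tendsto_zero.comp hd2
  have := (h1.const_mul (Real.exp x)).sub (h2.const_mul (Real.exp k))
  simp at this; exact this

lemma BS_tendsto_zero (htT : t < T) :
    Tendsto (BS t T x k) (nhdsWithin 0 (Set.Ioi 0))
      (nhds (max (Real.exp x - Real.exp k) 0)) := by
  have hs := sqrtT_pos htT
  have hB : Tendsto (fun σ : ℝ => σ * Real.sqrt (T - t) / 2)
      (nhdsWithin 0 (Set.Ioi 0)) (nhds 0) := by
    have hc : Continuous (fun σ : ℝ => σ * Real.sqrt (T - t) / 2) := by fun_prop
    have h := (hc.tendsto 0).mono_left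
      (nhdsWithin_le_nhds : nhdsWithin (0:ℝ) (Set.Ioi 0) ≤ nhds 0)
    simpa using h
  rcases lt_trichotomy x k with hxk | hxk | hxk
  · -- x < k : limit is 0
    have hmax : max (Real.exp x - Real.exp k) 0 = 0 := by
      rw [max_eq_right]
      have := Real.exp_lt_exp.2 hxk
      linarith
    have hA : Tendsto (fun σ : ℝ => (x - k) / (σ * Real.sqrt (T - t)))
        (nhdsWithin 0 (Set.Ioi 0)) atBot := by
      have hinv : Tendsto (fun σ : ℝ => (σ * Real.sqrt (T - t))⁻¹)
          (nhdsWithin 0 (Set.Ioi 0)) atTop := by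
        have h := tendsto_inv_nhdsGT_zero.atTop_mul_const (inv_pos.2 hs)
        refine h.congr fun σ => ?_
        rw [mul_inv]
      have := hinv.const_mul_atTop_of_neg (show x - k < 0 by linarith)
      simpa [div_eq_mul_inv] using this
    have hd1 : Tendsto (fun σ : ℝ => d1 t T x k σ) (nhdsWithin 0 (Set.Ioi 0)) atBot := by
      unfold d1; exact hA.atBot_add hB
    have hd2 : Tendsto (fun σ : ℝ => d2 t T x k σ) (nhdsWithin 0 (Set.Ioi 0)) atBot := by
      unfold d2
      simpa [sub_eq_add_neg] using hA.atBot_add hB.neg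
    have h1 := N_tendsto_zero.comp hd1
    have h2 := N_tendsto_zero.comp hd2
    have := (h1.const_mul (Real.exp x)).sub (h2.const_mul (Real.exp k))
    rw [hmax]
    simp [Function.comp] at this; exact this
  · -- x = k : limit is 0
    subst hxk
    have hmax : max (Real.exp x - Real.exp x) 0 = 0 := by simp
    have hd1 : Tendsto (fun σ : ℝ => d1 t T x x σ) (nhdsWithin 0 (Set.Ioi 0)) (nhds 0) := by
      have : (fun σ : ℝ => d1 t T x x σ) = fun σ => σ * Real.sqrt (T - t) / 2 := by
        funext σ; unfold d1; simp
      rw [this]; exact hB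
    have hd2 : Tendsto (fun σ : ℝ => d2 t T x x σ) (nhdsWithin 0 (Set.Ioi 0)) (nhds 0) := by
      have : (fun σ : ℝ => d2 t T x x σ) = fun σ => -(σ * Real.sqrt (T - t) / 2) := by
        funext σ; unfold d2; simp
      rw [this]; simpa using hB.neg
    have h1 := (N_continuous.tendsto 0).comp hd1
    have h2 := (N_continuous.tendsto 0).comp hd2
    have := (h1.const_mul (Real.exp x)).sub (h2.const_mul (Real.exp x))
    rw [hmax]
    simp [Function.comp] at this; exact this
  · -- x > k : limit is e^x - e^k
    have hek : Real.exp k < Real.exp x := Real.exp_lt_exp.2 hxk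
    have hmax : max (Real.exp x - Real.exp k) 0 = Real.exp x - Real.exp k := by
      rw [max_eq_left]; linarith
    have hA : Tendsto (fun σ : ℝ => (x - k) / (σ * Real.sqrt (T - t)))
        (nhdsWithin 0 (Set.Ioi 0)) atTop := by
      have hinv : Tendsto (fun σ : ℝ => (σ * Real.sqrt (T - t))⁻¹)
          (nhdsWithin 0 (Set.Ioi 0)) atTop := by
        have h := tendsto_inv_nhdsGT_zero.atTop_mul_const (inv_pos.2 hs)
        refine h.congr fun σ => ?_
        rw [mul_inv]
      have := hinv.const_mul_atTop (show 0 < x - k by linarith)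
      simpa [div_eq_mul_inv] using this
    have hd1 : Tendsto (fun σ : ℝ => d1 t T x k σ) (nhdsWithin 0 (Set.Ioi 0)) atTop := by
      unfold d1; exact hA.atTop_add hB
    have hd2 : Tendsto (fun σ : ℝ => d2 t T x k σ) (nhdsWithin 0 (Set.Ioi 0)) atTop := by
      unfold d2
      simpa [sub_eq_add_neg] using hA.atTop_add hB.neg
    have h1 := N_tendsto_one.comp hd1
    have h2 := N_tendsto_one.comp hd2
    have := (h1.const_mul (Real.exp x)).sub (h2.const_mul (Real.exp k))
    rw [hmax]
    simp [Function.comp] at this; exact this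

end BSlemmas

theorem bs_strictMono_bijection (t T x k : ℝ) (htT : t < T) :
    StrictMonoOn (BS t T x k) (Set.Ioi 0) ∧
    ContinuousOn (BS t T x k) (Set.Ioi 0) ∧
    Set.BijOn (BS t T x k) (Set.Ioi 0)
      (Set.Ioo (max (Real.exp x - Real.exp k) 0) (Real.exp x)) ∧
    Filter.Tendsto (BS t T x k) (nhdsWithin 0 (Set.Ioi 0))
      (nhds (max (Real.exp x - Real.exp k) 0)) ∧
    Filter.Tendsto (BS t T x k) Filter.atTop (nhds (Real.exp x)) := by
  have hmono := BS_strictMonoOn (t := t) (T := T) (x := x) (k := k) htT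
  have hcont := BS_continuousOn (t := t) (T := T) (x := x) (k := k) htT
  have hlim0 := BS_tendsto_zero (t := t) (T := T) (x := x) (k := k) htT
  have hlimT := BS_tendsto_atTop (t := t) (T := T) (x := x) (k := k) htT
  refine ⟨hmono, hcont, ⟨?_, hmono.injOn, ?_⟩, hlim0, hlimT⟩
  · -- MapsTo
    intro σ hσ
    rw [Set.mem_Ioi] at hσ
    constructor
    · -- lower bound
      have h1 : max (Real.exp x - Real.exp k) 0 ≤ BS t T x k (σ / 2) := by
        refine le_of_tendsto hlim0 ?_
        filter_upwards [Ioo_mem_nhdsGT_of_mem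
          (show (0:ℝ) ∈ Set.Ico 0 (σ / 2) by constructor <;> [rfl; linarith])] with
          z hz
        exact (hmono (Set.mem_Ioi.2 hz.1) (Set.mem_Ioi.2 (by linarith)) hz.2).le
      have h2 : BS t T x k (σ / 2) < BS t T x k σ :=
        hmono (Set.mem_Ioi.2 (by linarith)) (Set.mem_Ioi.2 hσ) (by linarith)
      linarith
    · -- upper bound
      have h1 : BS t T x k (σ + 1) ≤ Real.exp x := by
        refine ge_of_tendsto hlimT ?_
        filter_upwards [eventually_ge_atTop (σ + 1)] with z hz
        rcases eq_or_lt_of_le hz with h | h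
        · rw [← h]
        · exact (hmono (Set.mem_Ioi.2 (by linarith)) (Set.mem_Ioi.2 (by linarith)) h).le
      have h2 : BS t T x k σ < BS t T x k (σ + 1) :=
        hmono (Set.mem_Ioi.2 hσ) (Set.mem_Ioi.2 (by linarith)) (by linarith)
      linarith
  · -- SurjOn
    intro y hy
    obtain ⟨hy1, hy2⟩ := hy
    -- find a with BS a < y
    have ha : ∃ a, a ∈ Set.Ioi (0:ℝ) ∧ BS t T x k a < y := by
      have h := hlim0.eventually_lt_const hy1
      exact (h.and self_mem_nhdsWithin).exists.imp fun a h => ⟨h.2, h.1⟩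
    obtain ⟨a, ha0, hay⟩ := ha
    have hb : ∃ b, b ≥ a ∧ y < BS t T x k b := by
      have h := hlimT.eventually_const_lt hy2
      exact ((eventually_ge_atTop a).and h).exists.imp fun b h => ⟨h.1, h.2⟩
    obtain ⟨b, hab, hby⟩ := hb
    have hIcc : Set.Icc a b ⊆ Set.Ioi 0 := fun z hz =>
      Set.mem_Ioi.2 (lt_of_lt_of_le ha0 hz.1)
    have := intermediate_value_Icc hab (hcont.mono hIcc)
    have hymem : y ∈ Set.Icc (BS t T x k a) (BS t T x k b) := ⟨hay.le, hby.le⟩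
    obtain ⟨z, hz, hzy⟩ := this hymem
    exact ⟨z, hIcc hz, hzy⟩
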